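/- Let (I_1,…,I_r) and (J_1,…,J_q) be sequences of weakly increasing tuples with entries in {1,…,n} such that I_1 ⊎ ⋯ ⊎ I_r = J_1 ⊎ ⋯ ⊎ J_q as multisets (for each i ∈ {1,…,n}, the total number of entries equal to i among the I_k equals that among the J_k). Then for every totally positive n×n matrix A, (1/(|J_1|!⋯|J_q|!))·∏_{k=1}^q per(A_{J_k,J_k}) ≤ ∏_{k=1}^r per(A_{I_k,I_k}) ≤ |I_1|!⋯|I_r|!·∏_{k=1}^q per(A_{J_k,J_k}). -/

import Mathlib

open Matrix BigOperators

/-- The permanent of a square real matrix. -/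
def per {r : ℕ} (B : Matrix (Fin r) (Fin r) ℝ) : ℝ :=
  ∑ σ : Equiv.Perm (Fin r), ∏ i, B i (σ i)

/-- An `n × n` real matrix is totally positive if all its minors are positive. -/
def TotallyPos {n : ℕ} (A : Matrix (Fin n) (Fin n) ℝ) : Prop :=
  ∀ (k : ℕ) (f g : Fin k → Fin n), StrictMono f → StrictMono g →
    0 < (A.submatrix f g).det

lemma tp_entry_pos {n : ℕ} {A : Matrix (Fin n) (Fin n) ℝ} (hA : TotallyPos A)
    (i j : Fin n) : 0 < A i j := by
  have h := hA 1 (fun _ => i) (fun _ => j)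
    (fun a b hab => absurd (Subsingleton.elim a b) hab.ne)
    (fun a b hab => absurd (Subsingleton.elim a b) hab.ne)
  simpa [Matrix.det_fin_one] using h

lemma sm2 {n : ℕ} {x y : Fin n} (h : x < y) : StrictMono ![x, y] := by
  intro a b hab
  fin_cases a <;> fin_cases b <;> simp_all

lemma tp_exchange {n : ℕ} {A : Matrix (Fin n) (Fin n) ℝ} (hA : TotallyPos A)
    {x y u v : Fin n} (hxy : x ≤ y) (huv : u ≤ v) :
    A x v * A y u ≤ A x u * A y v := by
  rcases eq_or_lt_of_le hxy with h | h
  · subst h; rw [mul_comm]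
  rcases eq_or_lt_of_le huv with h' | h'
  · subst h'; rw [mul_comm]
  have hd := hA 2 ![x, y] ![u, v] (sm2 h) (sm2 h')
  rw [Matrix.det_fin_two] at hd
  simp [Matrix.submatrix] at hd
  nlinarith

lemma perm_prod_le {n m : ℕ} {A : Matrix (Fin n) (Fin n) ℝ} (hA : TotallyPos A)
    {f : Fin m → Fin n} (hf : Monotone f) (σ : Equiv.Perm (Fin m)) :
    ∏ i, A (f i) (f (σ i)) ≤ ∏ i, A (f i) (f i) := by
  suffices H : ∀ s : ℕ, ∀ σ : Equiv.Perm (Fin m), σ.support.card ≤ s →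
      ∏ i, A (f i) (f (σ i)) ≤ ∏ i, A (f i) (f i) from H _ σ le_rfl
  intro s
  induction s with
  | zero =>
    intro σ hs
    have : σ = 1 := by
      rw [← Equiv.Perm.support_eq_empty_iff, ← Finset.card_eq_zero]; omega
    subst this; simp
  | succ s ih =>
  intro σ hs
  by_cases hσ : σ = 1
  · subst hσ; simp
  · have hne : σ.support.Nonempty := by
      rw [Finset.nonempty_iff_ne_empty]
      simpa [Equiv.Perm.support_eq_empty_iff] using hσ
    set i := σ.support.min' hne with hidef
    have hi : i ∈ σ.support := Finset.min'_mem _ _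
    have hσi : σ i ≠ i := Equiv.Perm.mem_support.mp hi
    set j := σ⁻¹ i with hjdef
    have hσj : σ j = i := by simp [hjdef]
    have hij : i ≠ j := by
      intro h; rw [← h] at hσj; exact hσi hσj
    have hjmem : j ∈ σ.support := Equiv.Perm.mem_support.mpr (by rw [hσj]; exact hij)
    have hilej : i ≤ j := Finset.min'_le _ _ hjmem
    have hσimem : σ i ∈ σ.support := Equiv.Perm.apply_mem_support.mpr hi
    have hileσi : i ≤ σ i := Finset.min'_le _ _ hσimem
    set σ' : Equiv.Perm (Fin m) := σ * Equiv.swap i j with hσ'def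
    have hσ'i : σ' i = i := by simp [hσ'def, Equiv.swap_apply_left, hσj]
    have hσ'j : σ' j = σ i := by simp [hσ'def, Equiv.swap_apply_right]
    have hσ'k : ∀ k, k ≠ i → k ≠ j → σ' k = σ k := by
      intro k h1 h2; simp [hσ'def, Equiv.swap_apply_of_ne_of_ne h1 h2]
    have hsupp : σ'.support ⊆ σ.support.erase i := by
      intro k hk
      rw [Equiv.Perm.mem_support] at hk
      rcases eq_or_ne k i with rfl | h1
      · exact absurd hσ'i hk
      rcases eq_or_ne k j with rfl | h2
      · exact Finset.mem_erase.mpr ⟨Ne.symm hij, hjmem⟩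
      · rw [hσ'k k h1 h2] at hk
        exact Finset.mem_erase.mpr ⟨h1, Equiv.Perm.mem_support.mpr hk⟩
    have hcard : σ'.support.card ≤ s := by
      have h1 : σ'.support.card ≤ (σ.support.erase i).card := Finset.card_le_card hsupp
      have h2 : (σ.support.erase i).card < σ.support.card := Finset.card_erase_lt_of_mem hi
      omega
    have key : ∀ g : Fin m → ℝ,
        ∏ k, g k = g i * g j * ∏ k ∈ (Finset.univ.erase i).erase j, g k := by
      intro g
      rw [← Finset.mul_prod_erase Finset.univ g (Finset.mem_univ i),
        ← Finset.mul_prod_erase (Finset.univ.erase i) g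
          (Finset.mem_erase.mpr ⟨Ne.symm hij, Finset.mem_univ j⟩), mul_assoc]
    have step : ∏ k, A (f k) (f (σ k)) ≤ ∏ k, A (f k) (f (σ' k)) := by
      rw [key (fun k => A (f k) (f (σ k))), key (fun k => A (f k) (f (σ' k)))]
      have htail : ∏ k ∈ (Finset.univ.erase i).erase j, A (f k) (f (σ k))
          = ∏ k ∈ (Finset.univ.erase i).erase j, A (f k) (f (σ' k)) := by
        apply Finset.prod_congr rfl
        intro k hk
        rw [Finset.mem_erase, Finset.mem_erase] at hk
        rw [hσ'k k hk.2.1 hk.1]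
      rw [htail]
      apply mul_le_mul_of_nonneg_right _ (Finset.prod_nonneg fun k _ => (tp_entry_pos hA _ _).le)
      rw [hσ'i, hσ'j, hσj]
      exact tp_exchange hA (hf hilej) (hf hileσi)
    exact step.trans (ih σ' hcard)

lemma per_lower {n m : ℕ} {A : Matrix (Fin n) (Fin n) ℝ} (hA : TotallyPos A)
    (f : Fin m → Fin n) :
    ∏ i, A (f i) (f i) ≤ per (A.submatrix f f) := by
  have := Finset.single_le_sum (f := fun σ : Equiv.Perm (Fin m) => ∏ i, A.submatrix f f i (σ i))
    (fun σ _ => Finset.prod_nonneg fun i _ => (tp_entry_pos hA _ _).le)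
    (Finset.mem_univ (1 : Equiv.Perm (Fin m)))
  simpa [per, Matrix.submatrix] using this

lemma per_upper {n m : ℕ} {A : Matrix (Fin n) (Fin n) ℝ} (hA : TotallyPos A)
    {f : Fin m → Fin n} (hf : Monotone f) :
    per (A.submatrix f f) ≤ (Nat.factorial m : ℝ) * ∏ i, A (f i) (f i) := by
  have h1 : per (A.submatrix f f) ≤
      ∑ _σ : Equiv.Perm (Fin m), ∏ i, A (f i) (f i) :=
    Finset.sum_le_sum fun σ _ => perm_prod_le hA hf σ
  calc per (A.submatrix f f) ≤ _ := h1
    _ = (Nat.factorial m : ℝ) * ∏ i, A (f i) (f i) := by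
      rw [Finset.sum_const, Finset.card_univ, Fintype.card_perm, Fintype.card_fin,
        nsmul_eq_mul]

lemma prod_comp_univ {m n : ℕ} (f : Fin m → Fin n) (g : Fin n → ℝ) :
    ∏ a, g (f a) = ∏ b, g b ^ (Finset.univ.filter fun a => f a = b).card := by
  rw [← Finset.prod_fiberwise Finset.univ f (fun a => g (f a))]
  apply Finset.prod_congr rfl
  intro b _
  rw [Finset.prod_congr rfl (fun a ha => by
    rw [(Finset.mem_filter.mp ha).2]), Finset.prod_const]

theorem stmt7 (n r q : ℕ) (lI : Fin r → ℕ) (lJ : Fin q → ℕ)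
    (I : (k : Fin r) → Fin (lI k) → Fin n)
    (J : (k : Fin q) → Fin (lJ k) → Fin n)
    (hI : ∀ k, Monotone (I k)) (hJ : ∀ k, Monotone (J k))
    (hmulti : ∀ i : Fin n,
      (∑ k, (Finset.univ.filter fun l => I k l = i).card) =
        ∑ k, (Finset.univ.filter fun l => J k l = i).card) :
    ∀ A : Matrix (Fin n) (Fin n) ℝ, TotallyPos A →
      ((∏ k, (Nat.factorial (lJ k) : ℝ))⁻¹ * ∏ k, per (A.submatrix (J k) (J k))) ≤
          (∏ k, per (A.submatrix (I k) (I k))) ∧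
      (∏ k, per (A.submatrix (I k) (I k))) ≤
        (∏ k, (Nat.factorial (lI k) : ℝ)) * ∏ k, per (A.submatrix (J k) (J k)) := by
  intro A hA
  set DI : ℝ := ∏ k, ∏ l, A (I k l) (I k l) with hDIdef
  set DJ : ℝ := ∏ k, ∏ l, A (J k l) (J k l) with hDJdef
  have hD : DI = DJ := by
    have hfib : ∀ (m : ℕ) (f : Fin m → Fin n), ∏ l, A (f l) (f l)
        = ∏ i : Fin n, (A i i) ^ (Finset.univ.filter fun l => f l = i).card := fun m f =>
      prod_comp_univ f (fun i => A i i)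
    rw [hDIdef, hDJdef]
    rw [Finset.prod_congr rfl (fun k _ => hfib _ (I k)),
      Finset.prod_congr rfl (fun k _ => hfib _ (J k)),
      Finset.prod_comm, Finset.prod_comm (s := Finset.univ (α := Fin q))]
    apply Finset.prod_congr rfl
    intro i _
    rw [Finset.prod_pow_eq_pow_sum, Finset.prod_pow_eq_pow_sum, hmulti i]
  have hDIpos : (0:ℝ) < DI :=
    Finset.prod_pos fun k _ => Finset.prod_pos fun l _ => tp_entry_pos hA _ _
  have hPIlow : DI ≤ ∏ k, per (A.submatrix (I k) (I k)) := by
    apply Finset.prod_le_prod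
    · intro k _; exact (Finset.prod_pos fun l _ => tp_entry_pos hA _ _).le
    · intro k _; exact per_lower hA (I k)
  have hPJlow : DJ ≤ ∏ k, per (A.submatrix (J k) (J k)) := by
    apply Finset.prod_le_prod
    · intro k _; exact (Finset.prod_pos fun l _ => tp_entry_pos hA _ _).le
    · intro k _; exact per_lower hA (J k)
  have hPIup : ∏ k, per (A.submatrix (I k) (I k)) ≤
      (∏ k, (Nat.factorial (lI k) : ℝ)) * DI := by
    rw [hDIdef, ← Finset.prod_mul_distrib]
    apply Finset.prod_le_prod
    · intro k _
      exact le_trans (Finset.prod_pos fun l _ => tp_entry_pos hA _ _).le (per_lower hA (I k))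
    · intro k _; exact per_upper hA (hI k)
  have hPJup : ∏ k, per (A.submatrix (J k) (J k)) ≤
      (∏ k, (Nat.factorial (lJ k) : ℝ)) * DJ := by
    rw [hDJdef, ← Finset.prod_mul_distrib]
    apply Finset.prod_le_prod
    · intro k _
      exact le_trans (Finset.prod_pos fun l _ => tp_entry_pos hA _ _).le (per_lower hA (J k))
    · intro k _; exact per_upper hA (hJ k)
  have hFJpos : (0:ℝ) < ∏ k, (Nat.factorial (lJ k) : ℝ) :=
    Finset.prod_pos fun k _ => Nat.cast_pos.mpr (Nat.factorial_pos _)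
  have hFIpos : (0:ℝ) < ∏ k, (Nat.factorial (lI k) : ℝ) :=
    Finset.prod_pos fun k _ => Nat.cast_pos.mpr (Nat.factorial_pos _)
  constructor
  · rw [inv_mul_le_iff₀ hFJpos]
    calc ∏ k, per (A.submatrix (J k) (J k)) ≤ (∏ k, (Nat.factorial (lJ k) : ℝ)) * DJ := hPJup
      _ = (∏ k, (Nat.factorial (lJ k) : ℝ)) * DI := by rw [hD]
      _ ≤ _ := by
        apply mul_le_mul_of_nonneg_left _ hFJpos.le
        exact le_trans (le_of_eq rfl) hPIlow
  · calc ∏ k, per (A.submatrix (I k) (I k)) ≤ (∏ k, (Nat.factorial (lI k) : ℝ)) * DI := hPIup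
      _ = (∏ k, (Nat.factorial (lI k) : ℝ)) * DJ := by rw [hD]
      _ ≤ _ := mul_le_mul_of_nonneg_left hPJlow hFIpos.le
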